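/- Let k be a positive integer, s ≥ 3 an integer, and λ an integer with 0 < λ < 2^s. Write λ = 2^r·λ' with 0 ≤ r < s and λ' odd, and suppose r is odd and s − r > 1. Then ρ_{k,λ}(2^s) = (Σ_{i=0}^{(r−3)/2} 2^{ki + (s−2i−3)(k−1)}) · (ρ_{k,0}(8) − 2^{2k−1}) + 2^{k(r−1)/2 + (s−r−2)(k−1)} · ρ_{k, 2λ' mod 8}(8), where the sum is empty when r = 1. -/

import Mathlib

/-- `rho k lam n` is the number of `k`-tuples `(x₁,…,x_k) ∈ (ℤ/nℤ)^k` with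
`x₁² + ⋯ + x_k² ≡ lam (mod n)`. -/
noncomputable def rho (k : ℕ) (lam : ℤ) (n : ℕ) : ℕ :=
  Nat.card {x : Fin k → ZMod n // ∑ i, x i ^ 2 = (lam : ZMod n)}

open Function


lemma nat_card_sigma {ι : Type*} [Fintype ι] (f : ι → Type*) [∀ i, Finite (f i)] :
    Nat.card (Σ i, f i) = ∑ i, Nat.card (f i) := by
  letI : ∀ i, Fintype (f i) := fun i => Fintype.ofFinite (f i)
  simp [Nat.card_eq_fintype_card]

/-- Workhorse: count a subtype by grouping along fibers of `f`. -/
lemma sigma_count {α β : Type*} [Fintype α] [Fintype β] (f : α → β)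
    (p : α → Prop) (q : β → Prop) (c : ℕ)
    (h1 : ∀ a, p a → q (f a))
    (h2 : ∀ b, q b → Nat.card {a // p a ∧ f a = b} = c) :
    Nat.card {a // p a} = c * Nat.card {b // q b} := by
  classical
  have e : {a // p a} ≃ Σ b : {b // q b}, {x : {a // p a} // (⟨f x.1, h1 x.1 x.2⟩ : {b // q b}) = b} :=
    (Equiv.sigmaFiberEquiv (fun a : {a // p a} => (⟨f a.1, h1 a.1 a.2⟩ : {b // q b}))).symm
  have efib : ∀ b : {b // q b},
      Nat.card {x : {a // p a} // (⟨f x.1, h1 x.1 x.2⟩ : {b // q b}) = b} =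
        Nat.card {a // p a ∧ f a = b.1} := by
    intro b
    refine Nat.card_congr ((Equiv.subtypeEquivRight (fun x => ?_)).trans
      (Equiv.subtypeSubtypeEquivSubtypeInter p (fun a => f a = b.1)))
    constructor
    · intro h; rw [← h]
    · intro h; exact Subtype.ext h
  rw [Nat.card_congr e, nat_card_sigma]
  have : ∀ b : {b // q b},
      Nat.card {x : {a // p a} // (⟨f x.1, h1 x.1 x.2⟩ : {b // q b}) = b} = c :=
    fun b => (efib b).trans (h2 b.1 b.2)
  rw [Finset.sum_congr rfl (fun b _ => this b), Finset.sum_const, Finset.card_univ,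
    smul_eq_mul, Nat.card_eq_fintype_card, mul_comm]

lemma card_fiber_eq_card_ker {G H : Type*} [AddCommGroup G] [AddCommGroup H]
    (f : G →+ H) {b : H} (a₀ : G) (h : f a₀ = b) :
    Nat.card {a // f a = b} = Nat.card {a // f a = 0} := by
  refine Nat.card_congr ⟨fun a => ⟨a.1 - a₀, by simp [map_sub, a.2, h]⟩,
    fun a => ⟨a.1 + a₀, by simp [map_add, a.2, h]⟩, fun a => by simp, fun a => by simp⟩

lemma card_fiber_mul {G H : Type*} [AddCommGroup G] [AddCommGroup H] [Fintype G] [Fintype H]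
    (f : G →+ H) (hf : Surjective f) (b : H) :
    Nat.card {a // f a = b} * Fintype.card H = Fintype.card G := by
  classical
  obtain ⟨a₀, h⟩ := hf b
  rw [card_fiber_eq_card_ker f a₀ h]
  have key : Nat.card {a : G // True} = Nat.card {a // f a = 0} * Nat.card {b : H // True} := by
    refine sigma_count f (fun _ => True) (fun _ => True) _ (fun _ _ => trivial) (fun b _ => ?_)
    obtain ⟨a₁, h₁⟩ := hf b
    rw [show (fun a : G => True ∧ f a = b) = fun a => f a = b by ext a; simp]
    exact card_fiber_eq_card_ker f a₁ h₁
  have e1 : Nat.card {a : G // True} = Nat.card G :=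
    Nat.card_congr (Equiv.subtypeUnivEquiv fun _ => trivial)
  have e2 : Nat.card {b : H // True} = Nat.card H :=
    Nat.card_congr (Equiv.subtypeUnivEquiv fun _ => trivial)
  rw [e1, e2] at key
  simp only [Nat.card_eq_fintype_card] at key ⊢
  exact key.symm

lemma pi_fiber_card {k : ℕ} {A B : Type*} [Finite A] (g : A → B) (w : Fin k → B) (c : ℕ)
    (h : ∀ i, Nat.card {a : A // g a = w i} = c) :
    Nat.card {x : Fin k → A // ∀ i, g (x i) = w i} = c ^ k := by
  rw [Nat.card_congr (Equiv.subtypePiEquivPi (p := fun i a => g a = w i)), Nat.card_pi]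
  simp [h]

instance twoPowNeZero (s : ℕ) : NeZero ((2:ℕ)^s) := ⟨pow_ne_zero _ two_ne_zero⟩

/-- Reduction `ZMod 2^s → ZMod 2^t`. -/
noncomputable def red (s t : ℕ) (h : t ≤ s) : ZMod (2^s) →+* ZMod (2^t) :=
  ZMod.castHom (pow_dvd_pow 2 h) _

lemma red_apply {s t : ℕ} (h : t ≤ s) (a : ZMod (2^s)) :
    red s t h a = ((a.val : ℕ) : ZMod (2^t)) := by
  rw [red, ZMod.castHom_apply, ZMod.natCast_val]

lemma zmod_rep {n : ℕ} [NeZero n] (a : ZMod n) : (((a.val : ℤ)) : ZMod n) = a := by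
  push_cast
  rw [ZMod.natCast_val, ZMod.cast_id]

lemma red_int {s t : ℕ} (h : t ≤ s) (a : ZMod (2^s)) :
    red s t h a = (((a.val : ℤ)) : ZMod (2^t)) := by
  rw [red_apply]; push_cast; rfl

lemma red_val {s t : ℕ} (h : t ≤ s) (a : ZMod (2^s)) :
    (red s t h a).val = a.val % 2^t := by
  rw [red_apply, ZMod.val_natCast]

lemma red_red {s t u : ℕ} (hts : t ≤ s) (hut : u ≤ t) (a : ZMod (2^s)) :
    red t u hut (red s t hts a) = red s u (hut.trans hts) a := by
  rw [red_apply, red_val, red_apply]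
  exact (ZMod.natCast_eq_natCast_iff _ _ _).mpr (Nat.mod_mod_of_dvd a.val (pow_dvd_pow 2 hut))

lemma red_parity {s t : ℕ} (h : t ≤ s) (ht : 1 ≤ t) (a : ZMod (2^s)) :
    (2 ∣ (red s t h a).val) ↔ 2 ∣ a.val := by
  rw [red_val]
  exact Nat.dvd_mod_iff (dvd_pow_self 2 (by omega))

lemma int_cancel {j s : ℕ} (h : j ≤ s) (C D : ℤ) :
    (((2^j * C : ℤ)) : ZMod (2^s)) = ((2^j * D : ℤ)) ↔
      (((C : ℤ)) : ZMod (2^(s-j))) = ((D : ℤ)) := by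
  rw [ZMod.intCast_eq_intCast_iff, ZMod.intCast_eq_intCast_iff, Int.modEq_iff_dvd,
    Int.modEq_iff_dvd]
  have hs : ((2^s : ℕ) : ℤ) = 2^j * 2^(s-j) := by
    push_cast
    rw [← pow_add, Nat.add_sub_cancel' h]
  have hsj : ((2^(s-j) : ℕ) : ℤ) = 2^(s-j) := by push_cast; rfl
  rw [hs, hsj, show (2:ℤ)^j * D - 2^j * C = 2^j * (D - C) by ring]
  exact mul_dvd_mul_iff_left (pow_ne_zero _ (by norm_num : (2:ℤ) ≠ 0))

lemma int_sq {t : ℕ} (ht : 1 ≤ t) {A B : ℤ} (h : (2^t : ℤ) ∣ A - B) :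
    (2^(t+1) : ℤ) ∣ A^2 - B^2 := by
  have h2 : (2:ℤ) ∣ A - B := dvd_trans (dvd_pow_self 2 (by omega)) h
  have h3 : (2:ℤ) ∣ A + B := by
    obtain ⟨c, hc⟩ := h2
    exact ⟨c + B, by linarith⟩
  rw [sq_sub_sq, pow_succ']
  exact mul_dvd_mul h3 h

lemma red_dvd {s t : ℕ} (h : t ≤ s) {a b : ZMod (2^s)} (hab : red s t h a = red s t h b) :
    (2^t : ℤ) ∣ (a.val : ℤ) - (b.val : ℤ) := by
  rw [red_int, red_int] at hab
  have h1 : ((2^t : ℕ) : ℤ) ∣ (a.val:ℤ) - b.val :=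
    ((ZMod.intCast_eq_intCast_iff _ _ _).mp hab).symm.dvd
  have h2 : ((2^t : ℕ) : ℤ) = 2^t := by push_cast; rfl
  rwa [h2] at h1

lemma sq_lift {t : ℕ} (ht : 1 ≤ t) (a b : ZMod (2^(t+1)))
    (h : red (t+1) t (Nat.le_succ t) a = red (t+1) t (Nat.le_succ t) b) : a^2 = b^2 := by
  have hd := red_dvd (Nat.le_succ t) h
  have := int_sq ht hd
  calc a^2 = (((a.val : ℤ)) : ZMod (2^(t+1)))^2 := by rw [zmod_rep]
    _ = ((((a.val:ℤ)^2 : ℤ)) : ZMod (2^(t+1))) := by push_cast; ring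
    _ = ((((b.val:ℤ)^2 : ℤ)) : ZMod (2^(t+1))) := by
        rw [ZMod.intCast_eq_intCast_iff]
        have hc : ((2^(t+1) : ℕ) : ℤ) = 2^(t+1) := by push_cast; rfl
        exact (Int.modEq_iff_dvd.mpr (by rw [hc]; exact this)).symm
    _ = (((b.val : ℤ)) : ZMod (2^(t+1)))^2 := by push_cast; ring
    _ = b^2 := by rw [zmod_rep]

lemma red_surj {s t : ℕ} (h : t ≤ s) : Surjective (red s t h) := by
  intro b
  refine ⟨((b.val : ℕ) : ZMod (2^s)), ?_⟩
  rw [map_natCast, ZMod.natCast_val, ZMod.cast_id]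

lemma red_fiber_card {s t : ℕ} (h : t ≤ s) (b : ZMod (2^t)) :
    Nat.card {a : ZMod (2^s) // red s t h a = b} = 2^(s-t) := by
  have key := card_fiber_mul (red s t h).toAddMonoidHom (by simpa using red_surj h) b
  simp only [RingHom.toAddMonoidHom_eq_coe, AddMonoidHom.coe_coe] at key
  rw [ZMod.card, ZMod.card] at key
  have h2 : (2:ℕ)^s = 2^(s-t) * 2^t := by rw [← pow_add, Nat.sub_add_cancel h]
  exact Nat.eq_of_mul_eq_mul_right (pow_pos two_pos t) (key.trans h2)

lemma mul2_fiber {s : ℕ} (hs : 1 ≤ s) (b : ZMod (2^s)) (hb : 2 ∣ b.val) :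
    Nat.card {u : ZMod (2^s) // 2 * u = b} = 2 := by
  obtain ⟨c, hc⟩ := hb
  have hb' : 2 * ((c : ℕ) : ZMod (2^s)) = b := by
    rw [show (2 : ZMod (2^s)) * ((c:ℕ):ZMod (2^s)) = ((2*c : ℕ) : ZMod (2^s)) by push_cast; ring,
      ← hc, ZMod.natCast_val, ZMod.cast_id]
  have e0 : ∀ u : ZMod (2^s), 2 * u = 0 ↔ red s (s-1) (Nat.sub_le s 1) u = 0 := by
    intro u
    have h1 : (2 : ZMod (2^s)) * u = (((2^1 * (u.val : ℤ) : ℤ)) : ZMod (2^s)) := by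
      rw [show ((2^1 * (u.val : ℤ) : ℤ)) = 2 * (u.val : ℤ) by ring]
      push_cast
      rw [ZMod.natCast_val, ZMod.cast_id]
    have h2 : (0 : ZMod (2^s)) = (((2^1 * (0 : ℤ) : ℤ)) : ZMod (2^s)) := by norm_num
    rw [h1, h2, int_cancel hs (u.val : ℤ) 0, red_int]
    norm_num
  have f : ZMod (2^s) →+ ZMod (2^s) := AddMonoidHom.mulLeft (2 : ZMod (2^s))
  calc Nat.card {u : ZMod (2^s) // 2 * u = b}
      = Nat.card {u : ZMod (2^s) // 2 * u = 0} := by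
        exact card_fiber_eq_card_ker (AddMonoidHom.mulLeft (2 : ZMod (2^s))) _ hb'
    _ = Nat.card {u : ZMod (2^s) // red s (s-1) (Nat.sub_le s 1) u = 0} :=
        Nat.card_congr (Equiv.subtypeEquivRight e0)
    _ = 2^(s-(s-1)) := red_fiber_card _ 0
    _ = 2 := by rw [show s - (s-1) = 1 by omega]; norm_num

lemma zmod2_cases : ∀ x : ZMod 2, x = 0 ∨ x = 1 := by decide

lemma zmod2_sq : ∀ x : ZMod 2, x^2 = x := by decide

lemma fun_fiber {k : ℕ} (a : Fin k → ZMod 2) (hi : ∃ i, a i = 1) (ε : ZMod 2) :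
    Nat.card {e : Fin k → ZMod 2 // ∑ i, a i * e i = ε} = 2^(k-1) := by
  classical
  obtain ⟨i₀, hi₀⟩ := hi
  have hk : 1 ≤ k := i₀.pos
  have hf : Surjective (fun e : Fin k → ZMod 2 => ∑ i, a i * e i) := by
    intro ε'
    refine ⟨fun j => if j = i₀ then ε' else 0, ?_⟩
    simp [Finset.sum_ite_eq', hi₀]
  have key := card_fiber_mul
    ({ toFun := fun e => ∑ i, a i * e i
       map_zero' := by simp
       map_add' := fun x y => by simp [mul_add, Finset.sum_add_distrib] } :
      (Fin k → ZMod 2) →+ ZMod 2) hf ε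
  simp only [AddMonoidHom.coe_mk, ZeroHom.coe_mk] at key
  rw [ZMod.card] at key
  have hcard : Fintype.card (Fin k → ZMod 2) = 2^k := by
    simp [ZMod.card]
  rw [hcard, show (2:ℕ)^k = 2^(k-1) * 2 by rw [← pow_succ, Nat.sub_add_cancel hk]] at key
  exact Nat.eq_of_mul_eq_mul_right two_pos key

noncomputable def Pc (k s : ℕ) (lam : ℤ) : ℕ :=
  Nat.card {x : Fin k → ZMod (2^s) //
    (∑ i, x i ^ 2 = ((lam : ℤ) : ZMod (2^s))) ∧ ∃ i, ¬ 2 ∣ (x i).val}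

lemma card_split {α : Type*} [Fintype α] (q p : α → Prop) :
    Nat.card {x // q x} = Nat.card {x // q x ∧ p x} + Nat.card {x // q x ∧ ¬ p x} := by
  classical
  rw [Nat.card_eq_fintype_card, Nat.card_eq_fintype_card, Nat.card_eq_fintype_card,
    Fintype.card_subtype, Fintype.card_subtype, Fintype.card_subtype,
    ← Finset.filter_filter, ← Finset.filter_filter]
  exact (Finset.card_filter_add_card_filter_not (p := p)).symm

lemma sum_red_sq {k s t : ℕ} (h : t ≤ s) (u : Fin k → ZMod (2^s)) :
    red s t h (∑ i, u i ^ 2) = ∑ i, (red s t h (u i))^2 := by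
  rw [map_sum]
  exact Finset.sum_congr rfl fun i _ => map_pow _ _ _

lemma four_mul_iff {k t : ℕ} (mu : ℤ) (u : Fin k → ZMod (2^(t+2))) :
    (∑ i, (2 * u i)^2 = ((4*mu : ℤ) : ZMod (2^(t+2)))) ↔
      ∑ i, (red (t+2) t (by omega) (u i))^2 = ((mu : ℤ) : ZMod (2^t)) := by
  have h1 : ∑ i, (2 * u i)^2
      = (((2^2 * ((∑ i, u i ^2).val : ℤ)) : ℤ) : ZMod (2^(t+2))) := by
    push_cast
    rw [ZMod.natCast_val, ZMod.cast_id, Finset.mul_sum]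
    exact Finset.sum_congr rfl fun i _ => by ring
  have h2 : ((4*mu : ℤ) : ZMod (2^(t+2))) = (((2^2 * mu : ℤ)) : ZMod (2^(t+2))) := by norm_num
  rw [h1, h2, int_cancel (by omega : 2 ≤ t+2)]
  have h4 : (((((∑ i, u i ^ 2).val : ℤ)) : ZMod (2^(t+2-2))) = ((mu : ℤ) : ZMod (2^(t+2-2))))
      ↔ ((((∑ i, u i ^ 2).val : ℤ) : ZMod (2^t)) = ((mu : ℤ) : ZMod (2^t))) := Iff.rfl
  rw [h4, ← red_int (by omega : t ≤ t+2), sum_red_sq]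

lemma even_val_two_mul {s : ℕ} (u : ZMod (2^s)) (hs : 1 ≤ s) : 2 ∣ (2 * u).val := by
  have : (2 : ZMod (2^s)) * u = ((2 * u.val : ℕ) : ZMod (2^s)) := by
    push_cast
    rw [ZMod.natCast_val, ZMod.cast_id]
  rw [this, ZMod.val_natCast]
  exact (Nat.dvd_mod_iff (dvd_pow_self 2 (by omega))).mpr ⟨u.val, rfl⟩

lemma imprim (k t : ℕ) (mu : ℤ) :
    Nat.card {x : Fin k → ZMod (2^(t+2)) //
      (∑ i, x i ^ 2 = ((4*mu : ℤ) : ZMod (2^(t+2)))) ∧ ∀ i, 2 ∣ (x i).val}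
      = 2^k * rho k mu (2^t) := by
  classical
  have hts : t ≤ t + 2 := by omega
  -- Step 1 : card of U = 4^k * rho
  have step1 : Nat.card {u : Fin k → ZMod (2^(t+2)) //
      ∑ i, (red (t+2) t hts (u i))^2 = ((mu : ℤ) : ZMod (2^t))} = 4^k * rho k mu (2^t) := by
    have := sigma_count (fun u : Fin k → ZMod (2^(t+2)) => fun i => red (t+2) t hts (u i))
      (fun u => ∑ i, (red (t+2) t hts (u i))^2 = ((mu : ℤ) : ZMod (2^t)))
      (fun w => ∑ i, (w i)^2 = ((mu : ℤ) : ZMod (2^t))) (4^k)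
      (fun a ha => ha) ?_
    · rw [this]; rfl
    · intro w hw
      have e : ∀ u : Fin k → ZMod (2^(t+2)),
          ((∑ i, (red (t+2) t hts (u i))^2 = ((mu : ℤ) : ZMod (2^t))) ∧
            (fun i => red (t+2) t hts (u i)) = w) ↔ ∀ i, red (t+2) t hts (u i) = w i := by
        intro u
        constructor
        · intro h i; rw [← congrFun h.2 i]
        · intro h
          have hfw : (fun i => red (t+2) t hts (u i)) = w := funext h
          exact ⟨by rw [show ∑ i, (red (t+2) t hts (u i))^2 = ∑ i, w i ^2 from
            Finset.sum_congr rfl fun i _ => by rw [h i]]; exact hw, hfw⟩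
      rw [Nat.card_congr (Equiv.subtypeEquivRight e)]
      have := pi_fiber_card (red (t+2) t hts) w (2^2) (fun i => by
        rw [red_fiber_card hts (w i)]; congr 1; omega)
      rw [this]
      norm_num
  -- Step 2 : card of U = 2^k * card imprim
  have step2 : Nat.card {u : Fin k → ZMod (2^(t+2)) //
      ∑ i, (red (t+2) t hts (u i))^2 = ((mu : ℤ) : ZMod (2^t))}
      = 2^k * Nat.card {x : Fin k → ZMod (2^(t+2)) //
        (∑ i, x i ^ 2 = ((4*mu : ℤ) : ZMod (2^(t+2)))) ∧ ∀ i, 2 ∣ (x i).val} := by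
    refine sigma_count (fun u : Fin k → ZMod (2^(t+2)) => fun i => 2 * u i)
      (fun u => ∑ i, (red (t+2) t hts (u i))^2 = ((mu : ℤ) : ZMod (2^t)))
      (fun x => (∑ i, x i ^ 2 = ((4*mu : ℤ) : ZMod (2^(t+2)))) ∧ ∀ i, 2 ∣ (x i).val)
      (2^k) ?_ ?_
    · intro u hu
      refine ⟨?_, fun i => even_val_two_mul (u i) (Nat.succ_le_succ (Nat.zero_le _))⟩
      exact (four_mul_iff mu u).mpr hu
    · intro x hx
      have e : ∀ u : Fin k → ZMod (2^(t+2)),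
          ((∑ i, (red (t+2) t hts (u i))^2 = ((mu : ℤ) : ZMod (2^t))) ∧
            (fun i => 2 * u i) = x) ↔ ∀ i, 2 * u i = x i := by
        intro u
        constructor
        · intro h i; rw [← congrFun h.2 i]
        · intro h
          have hfw : (fun i => 2 * u i) = x := funext h
          refine ⟨?_, hfw⟩
          rw [← four_mul_iff mu u, show ∑ i, (2 * u i)^2 = ∑ i, x i ^2 from
            Finset.sum_congr rfl fun i _ => by rw [h i], hx.1]
      rw [Nat.card_congr (Equiv.subtypeEquivRight e)]
      exact pi_fiber_card (fun v : ZMod (2^(t+2)) => 2 * v) x 2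
        (fun i => mul2_fiber (Nat.succ_le_succ (Nat.zero_le _)) (x i) (hx.2 i))
  rw [step1] at step2
  have h4 : (4:ℕ)^k = 2^k * 2^k := by rw [show (4:ℕ) = 2*2 by norm_num, mul_pow]
  rw [h4, mul_assoc] at step2
  exact (Nat.eq_of_mul_eq_mul_left (pow_pos two_pos k) step2).symm

lemma split (k t : ℕ) (mu : ℤ) :
    rho k (4*mu) (2^(t+2)) = Pc k (t+2) (4*mu) + 2^k * rho k mu (2^t) := by
  classical
  have h := card_split (α := Fin k → ZMod (2^(t+2)))
    (fun x => ∑ i, x i ^ 2 = ((4*mu : ℤ) : ZMod (2^(t+2)))) (fun x => ∃ i, ¬ 2 ∣ (x i).val)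
  have himp : Nat.card {x : Fin k → ZMod (2^(t+2)) //
      (∑ i, x i ^ 2 = ((4*mu : ℤ) : ZMod (2^(t+2)))) ∧ ¬ ∃ i, ¬ 2 ∣ (x i).val}
      = 2^k * rho k mu (2^t) := by
    have e : {x : Fin k → ZMod (2^(t+2)) //
        (∑ i, x i ^ 2 = ((4*mu : ℤ) : ZMod (2^(t+2)))) ∧ ¬ ∃ i, ¬ 2 ∣ (x i).val} ≃
        {x : Fin k → ZMod (2^(t+2)) //
        (∑ i, x i ^ 2 = ((4*mu : ℤ) : ZMod (2^(t+2)))) ∧ ∀ i, 2 ∣ (x i).val} :=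
      Equiv.subtypeEquivRight (fun x => and_congr_right (fun _ => not_exists_not))
    rw [Nat.card_congr e]
    exact imprim k t mu
  rw [himp] at h
  exact h

lemma red_lift {s t : ℕ} (h : t ≤ s) (b : ZMod (2^t)) :
    red s t h (((b.val : ℕ) : ZMod (2^s))) = b := by
  rw [map_natCast, ZMod.natCast_val, ZMod.cast_id]

lemma sq_val_cast {t : ℕ} (ht : 1 ≤ t) (A : ℕ) :
    ((((A : ZMod (2^t)).val : ℕ)) : ZMod (2^(t+1)))^2 = (((A^2 : ℕ)) : ZMod (2^(t+1))) := by
  have hval : ((A : ZMod (2^t))).val = A % 2^t := ZMod.val_natCast _ A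
  have hdvd : (2^t : ℤ) ∣ ((A : ZMod (2^t)).val : ℤ) - (A : ℤ) := by
    rw [hval]
    have hc := Nat.div_add_mod A (2^t)
    refine ⟨-(A / 2^t : ℕ), ?_⟩
    have hc' : ((2:ℤ)^t) * ((A/2^t : ℕ) : ℤ) + ((A % 2^t : ℕ) : ℤ) = (A : ℤ) := by
      exact_mod_cast congrArg (Nat.cast : ℕ → ℤ) hc
    push_cast
    linarith
  have := int_sq ht hdvd
  have hcast : ((2^(t+1) : ℕ) : ℤ) = 2^(t+1) := by push_cast; rfl
  calc ((((A : ZMod (2^t)).val : ℕ)) : ZMod (2^(t+1)))^2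
      = (((((A : ZMod (2^t)).val : ℤ)^2 : ℤ)) : ZMod (2^(t+1))) := by push_cast; ring
    _ = ((((A:ℤ)^2 : ℤ)) : ZMod (2^(t+1))) := by
        rw [ZMod.intCast_eq_intCast_iff]
        exact (Int.modEq_iff_dvd.mpr (by rw [hcast]; exact (dvd_sub_comm.mp this))).symm.symm
    _ = (((A^2 : ℕ)) : ZMod (2^(t+1))) := by push_cast; ring

lemma int_cancel' {j u s : ℕ} (hu : j + u = s) (C D : ℤ) :
    (((2^j * C : ℤ)) : ZMod (2^s)) = ((2^j * D : ℤ)) ↔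
      (((C : ℤ)) : ZMod (2^u)) = ((D : ℤ)) := by
  rw [ZMod.intCast_eq_intCast_iff, ZMod.intCast_eq_intCast_iff, Int.modEq_iff_dvd,
    Int.modEq_iff_dvd]
  have hs : ((2^s : ℕ) : ℤ) = 2^j * 2^u := by
    push_cast
    rw [← pow_add, hu]
  have hsj : ((2^u : ℕ) : ℤ) = 2^u := by push_cast; rfl
  rw [hs, hsj, show (2:ℤ)^j * D - 2^j * C = 2^j * (D - C) by ring]
  exact mul_dvd_mul_iff_left (pow_ne_zero _ (by norm_num : (2:ℤ) ≠ 0))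

lemma balanced (k t : ℕ) (ht : 2 ≤ t) (lam : ℤ) (w : Fin k → ZMod (2^t))
    (hprim : ∃ i, ¬ 2 ∣ (w i).val)
    (hsum : ∑ i, ((((w i).val : ℕ)) : ZMod (2^(t+1)))^2 = ((lam : ℤ) : ZMod (2^(t+1)))) :
    Nat.card {z : Fin k → ZMod (2^(t+1)) //
      (∀ i, red (t+1) t (Nat.le_succ t) (z i) = w i) ∧
      ∑ i, ((((z i).val : ℕ)) : ZMod (2^(t+2)))^2 = ((lam : ℤ) : ZMod (2^(t+2)))} = 2^(k-1) := by
  classical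
  set A : Fin k → ℕ := fun i => (w i).val with hA
  set T : (Fin k → ZMod 2) → (Fin k → ZMod (2^(t+1))) :=
    fun e i => ((A i + 2^t * (e i).val : ℕ) : ZMod (2^(t+1))) with hT
  have h20 : ((2^t : ℕ) : ZMod (2^t)) = 0 := ZMod.natCast_self (2^t)
  have hTfib : ∀ e i, red (t+1) t (Nat.le_succ t) (T e i) = w i := by
    intro e i
    show red (t+1) t (Nat.le_succ t) ((A i + 2^t * (e i).val : ℕ) : ZMod (2^(t+1))) = w i
    rw [map_natCast, Nat.cast_add, Nat.cast_mul, h20, zero_mul, add_zero]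
    show (((w i).val : ℕ) : ZMod (2^t)) = w i
    rw [ZMod.natCast_val, ZMod.cast_id]
  have hTsq : ∀ e i, (((T e i).val : ℕ) : ZMod (2^(t+2)))^2
      = (((A i + 2^t * (e i).val)^2 : ℕ) : ZMod (2^(t+2))) :=
    fun e i => sq_val_cast (Nat.succ_le_succ (Nat.zero_le t)) (A i + 2^t * (e i).val)
  set S : ℤ := ∑ i, (A i : ℤ)^2 with hSdef
  set P : (Fin k → ZMod 2) → ℤ := fun e => ∑ i, (A i : ℤ) * ((e i).val : ℤ) with hPdef
  set Q : (Fin k → ZMod 2) → ℤ := fun e => ∑ i, ((e i).val : ℤ)^2 with hQdef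
  have hS : ((S : ℤ) : ZMod (2^(t+1))) = ((lam : ℤ) : ZMod (2^(t+1))) := by
    rw [← hsum, hSdef]
    push_cast
    rfl
  have hdvd : ((2^(t+1) : ℕ) : ℤ) ∣ lam - S :=
    ((ZMod.intCast_eq_intCast_iff _ _ _).mp hS).dvd
  have hmod1 : ((2^(t+1) : ℕ) : ℤ) = 2^(t+1) := by push_cast; rfl
  have hmod2 : ((2^(t+2) : ℕ) : ℤ) = 2^(t+2) := by push_cast; rfl
  rw [hmod1] at hdvd
  obtain ⟨d, hd⟩ := hdvd
  set δ : ZMod 2 := ((d : ℤ) : ZMod 2) with hδ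
  set a : Fin k → ZMod 2 := fun i => ((A i : ℕ) : ZMod 2) with ha
  have hai : ∃ i, a i = 1 := by
    obtain ⟨i, hi⟩ := hprim
    refine ⟨i, ?_⟩
    rcases zmod2_cases (a i) with h0 | h1
    · exact absurd ((ZMod.natCast_eq_zero_iff (A i) 2).mp h0) hi
    · exact h1
  have key : ∀ e : Fin k → ZMod 2,
      ((∑ i, (((T e i).val : ℕ) : ZMod (2^(t+2)))^2 = ((lam : ℤ) : ZMod (2^(t+2)))) ↔
        (∑ i, a i * e i = δ)) := by
    intro e
    have hZ : (∑ i, ((A i + 2^t * (e i).val : ℕ)^2 : ℤ))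
        = S + 2^(t+1) * P e + 2^(2*t) * Q e := by
      rw [hSdef, hPdef, hQdef, Finset.mul_sum, Finset.mul_sum,
        ← Finset.sum_add_distrib, ← Finset.sum_add_distrib]
      refine Finset.sum_congr rfl fun i _ => by push_cast; ring
    have hL : ∑ i, (((T e i).val : ℕ) : ZMod (2^(t+2)))^2
        = (((S + 2^(t+1) * P e + 2^(2*t) * Q e : ℤ)) : ZMod (2^(t+2))) := by
      rw [Finset.sum_congr rfl (fun i _ => hTsq e i), ← hZ]
      push_cast
      rfl
    have h2t : (2:ℤ)^(2*t) = 2^(t+2) * 2^(2*t-(t+2)) := by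
      rw [← pow_add]
      congr 1
      omega
    have h1 : (((S + 2^(t+1) * P e + 2^(2*t) * Q e : ℤ)) : ZMod (2^(t+2)))
        = (((S + 2^(t+1) * P e : ℤ)) : ZMod (2^(t+2))) := by
      rw [ZMod.intCast_eq_intCast_iff]
      refine Int.modEq_iff_dvd.mpr ?_
      rw [hmod2]
      exact ⟨-(2^(2*t-(t+2)) * Q e), by rw [h2t]; ring⟩
    have hlam2 : ((lam : ℤ) : ZMod (2^(t+2))) = (((S + 2^(t+1)*d : ℤ)) : ZMod (2^(t+2))) := by
      rw [show S + 2^(t+1)*d = lam from by linarith]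
    rw [hL, h1, hlam2]
    have hstep : ((((S + 2^(t+1) * P e : ℤ)) : ZMod (2^(t+2)))
          = (((S + 2^(t+1) * d : ℤ)) : ZMod (2^(t+2))))
        ↔ ((((2^(t+1) * P e : ℤ)) : ZMod (2^(t+2)))
          = (((2^(t+1) * d : ℤ)) : ZMod (2^(t+2)))) := by
      constructor
      · intro h
        have h' := congrArg (fun x : ZMod (2^(t+2)) => x - ((S : ℤ) : ZMod (2^(t+2)))) h
        simpa [Int.cast_add, add_sub_cancel_left] using h'
      · intro h
        have h' := congrArg (fun x : ZMod (2^(t+2)) => ((S : ℤ) : ZMod (2^(t+2))) + x) h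
        simpa [Int.cast_add] using h'
    rw [hstep, int_cancel' (show (t+1)+1 = t+2 from by omega) (P e) d]
    have hterm : ∀ i, ((((A i : ℤ) * ((e i).val : ℤ)) : ℤ) : ZMod 2) = a i * e i := by
      intro i
      rw [Int.cast_mul, Int.cast_natCast, Int.cast_natCast, ZMod.natCast_val (e i), ZMod.cast_id]
    have hPcast : (((P e : ℤ)) : ZMod 2) = ∑ i, a i * e i := by
      rw [hPdef]
      push_cast
      refine Finset.sum_congr rfl fun i _ => ?_
      have := hterm i
      push_cast at this
      exact this
    rw [hPcast]
  -- T is a bijection onto the fiber over w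
  have hvT : ∀ (ee : Fin k → ZMod 2) i, (T ee i).val = A i + 2^t * (ee i).val := by
    intro ee i
    show (((A i + 2^t * (ee i).val : ℕ) : ZMod (2^(t+1)))).val = _
    rw [ZMod.val_natCast]
    apply Nat.mod_eq_of_lt
    have h1 : A i < 2^t := ZMod.val_lt (w i)
    have h2 : (ee i).val < 2 := ZMod.val_lt (ee i)
    have h3 : (2:ℕ)^(t+1) = 2^t + 2^t := by rw [pow_succ]; ring
    have h4 : 2^t * (ee i).val ≤ 2^t * 1 := Nat.mul_le_mul_left _ (by omega)
    omega
  have hTinj : Function.Injective T := by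
    intro e e' hee
    funext i
    have h1 := congrArg ZMod.val (congrFun hee i)
    rw [hvT e i, hvT e' i] at h1
    have h2 : (e i).val = (e' i).val :=
      Nat.eq_of_mul_eq_mul_left (pow_pos two_pos t) (by omega)
    exact ZMod.val_injective _ h2
  have hcard2 : Fintype.card {z : Fin k → ZMod (2^(t+1)) //
      ∀ i, red (t+1) t (Nat.le_succ t) (z i) = w i} = 2^k := by
    rw [← Nat.card_eq_fintype_card,
      pi_fiber_card (red (t+1) t (Nat.le_succ t)) w 2
        (fun i => by rw [red_fiber_card, show t+1-t = 1 from by omega, pow_one])]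
  have hT' : Function.Bijective (fun e => (⟨T e, hTfib e⟩ :
      {z : Fin k → ZMod (2^(t+1)) // ∀ i, red (t+1) t (Nat.le_succ t) (z i) = w i})) := by
    rw [Fintype.bijective_iff_injective_and_card]
    refine ⟨fun e e' h => hTinj (congrArg Subtype.val h), ?_⟩
    rw [hcard2]
    simp [ZMod.card]
  have efinal : {e : Fin k → ZMod 2 //
      ∑ i, (((T e i).val : ℕ) : ZMod (2^(t+2)))^2 = ((lam : ℤ) : ZMod (2^(t+2)))} ≃
      {z : Fin k → ZMod (2^(t+1)) //
      (∀ i, red (t+1) t (Nat.le_succ t) (z i) = w i) ∧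
      ∑ i, ((((z i).val : ℕ)) : ZMod (2^(t+2)))^2 = ((lam : ℤ) : ZMod (2^(t+2)))} := by
    exact ((Equiv.ofBijective _ hT').subtypeEquiv
      (q := fun y : {z : Fin k → ZMod (2^(t+1)) //
          ∀ i, red (t+1) t (Nat.le_succ t) (z i) = w i} =>
        ∑ i, ((((y.1 i).val : ℕ)) : ZMod (2^(t+2)))^2 = ((lam : ℤ) : ZMod (2^(t+2))))
      (fun e => Iff.rfl)).trans
      (Equiv.subtypeSubtypeEquivSubtypeInter
        (fun z : Fin k → ZMod (2^(t+1)) => ∀ i, red (t+1) t (Nat.le_succ t) (z i) = w i)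
        (fun z => ∑ i, ((((z i).val : ℕ)) : ZMod (2^(t+2)))^2 = ((lam : ℤ) : ZMod (2^(t+2)))))
  rw [← Nat.card_congr efinal, Nat.card_congr (Equiv.subtypeEquivRight key)]
  exact fun_fiber a hai δ

lemma prim_transfer {k s t : ℕ} (h : t ≤ s) (ht : 1 ≤ t) (x : Fin k → ZMod (2^s)) :
    (∃ i, ¬ 2 ∣ ((red s t h (x i))).val) ↔ ∃ i, ¬ 2 ∣ (x i).val :=
  exists_congr fun i => not_congr (red_parity h ht (x i))

lemma Pc_level (k t : ℕ) (ht : 1 ≤ t) (lam : ℤ) :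
    Pc k (t+1) lam = 2^k * Nat.card {w : Fin k → ZMod (2^t) //
      (∃ i, ¬ 2 ∣ (w i).val) ∧
      ∑ i, ((((w i).val : ℕ)) : ZMod (2^(t+1)))^2 = ((lam : ℤ) : ZMod (2^(t+1)))} := by
  classical
  unfold Pc
  refine sigma_count
    (fun z : Fin k → ZMod (2^(t+1)) => fun i => red (t+1) t (Nat.le_succ t) (z i))
    (fun z => (∑ i, z i ^ 2 = ((lam:ℤ) : ZMod (2^(t+1)))) ∧ ∃ i, ¬ 2 ∣ (z i).val)
    (fun w => (∃ i, ¬ 2 ∣ (w i).val) ∧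
      ∑ i, ((((w i).val : ℕ)) : ZMod (2^(t+1)))^2 = ((lam : ℤ) : ZMod (2^(t+1))))
    (2^k) ?_ ?_
  · rintro z ⟨hsum, hprim⟩
    refine ⟨(prim_transfer (Nat.le_succ t) ht z).mpr hprim, ?_⟩
    rw [← hsum]
    refine Finset.sum_congr rfl fun i _ => ?_
    refine sq_lift ht _ _ ?_
    rw [red_lift]
  · rintro w ⟨hwprim, hwsum⟩
    have e : ∀ z : Fin k → ZMod (2^(t+1)),
        (((∑ i, z i ^ 2 = ((lam:ℤ) : ZMod (2^(t+1)))) ∧ ∃ i, ¬ 2 ∣ (z i).val) ∧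
          (fun i => red (t+1) t (Nat.le_succ t) (z i)) = w) ↔
        ∀ i, red (t+1) t (Nat.le_succ t) (z i) = w i := by
      intro z
      constructor
      · intro h i
        exact congrFun h.2 i
      · intro hz
        have hfw : (fun i => red (t+1) t (Nat.le_succ t) (z i)) = w := funext hz
        refine ⟨⟨?_, ?_⟩, hfw⟩
        · rw [← hwsum]
          refine Finset.sum_congr rfl fun i _ => ?_
          refine sq_lift ht _ _ ?_
          rw [red_lift, hz i]
        · obtain ⟨i, hi⟩ := hwprim
          exact ⟨i, by rw [← hz i] at hi; exact (not_congr (red_parity _ ht (z i))).mp hi⟩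
    rw [Nat.card_congr (Equiv.subtypeEquivRight e)]
    exact pi_fiber_card _ w 2
      (fun i => by rw [red_fiber_card, show t+1-t = 1 from by omega, pow_one])

lemma Pc_empty (s : ℕ) (lam : ℤ) : Pc 0 s lam = 0 := by
  unfold Pc
  have : IsEmpty {x : Fin 0 → ZMod (2^s) //
      (∑ i, x i ^ 2 = ((lam : ℤ) : ZMod (2^s))) ∧ ∃ i, ¬ 2 ∣ (x i).val} :=
    ⟨fun x => by obtain ⟨i, _⟩ := x.2.2; exact i.elim0⟩
  exact Nat.card_of_isEmpty

lemma descent (k t : ℕ) (ht : 2 ≤ t) (lam : ℤ) :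
    Pc k (t+2) lam = 2^(k-1) * Pc k (t+1) lam := by
  classical
  rcases Nat.eq_zero_or_pos k with hk | hk
  · subst hk
    rw [Pc_empty, Pc_empty, mul_zero]
  have ht1 : (1:ℕ) ≤ t := by omega
  have h11 : (1:ℕ) ≤ t+1 := by omega
  have e21 : t+2-(t+1) = 1 := by omega
  have ekk : k + (k-1) = 2*k-1 := by omega
  have ekk' : (k-1) + k = 2*k-1 := by omega
  have h21 : t+1 ≤ t+2 := by omega
  have h20 : t ≤ t+2 := by omega
  have hA := Pc_level k t ht1 lam
  -- claim B
  have hB : Pc k (t+2) lam = 2^(2*k-1) * Nat.card {w : Fin k → ZMod (2^t) //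
      (∃ i, ¬ 2 ∣ (w i).val) ∧
      ∑ i, ((((w i).val : ℕ)) : ZMod (2^(t+1)))^2 = ((lam : ℤ) : ZMod (2^(t+1)))} := by
    unfold Pc
    refine sigma_count
      (fun x : Fin k → ZMod (2^(t+2)) => fun i => red (t+2) t h20 (x i))
      (fun x => (∑ i, x i ^ 2 = ((lam:ℤ) : ZMod (2^(t+2)))) ∧ ∃ i, ¬ 2 ∣ (x i).val)
      (fun w => (∃ i, ¬ 2 ∣ (w i).val) ∧
        ∑ i, ((((w i).val : ℕ)) : ZMod (2^(t+1)))^2 = ((lam : ℤ) : ZMod (2^(t+1))))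
      (2^(2*k-1)) ?_ ?_
    · rintro x ⟨hsum, hprim⟩
      refine ⟨(prim_transfer h20 ht1 x).mpr hprim, ?_⟩
      have hs1 : ∑ i, (red (t+2) (t+1) h21 (x i))^2 = ((lam:ℤ) : ZMod (2^(t+1))) := by
        rw [← sum_red_sq h21 x, hsum, map_intCast]
      rw [← hs1]
      refine Finset.sum_congr rfl fun i _ => ?_
      refine sq_lift ht1 _ _ ?_
      rw [red_lift, red_red h21 (Nat.le_succ t) (x i)]
    · rintro w ⟨hwprim, hwsum⟩
      -- drop primitivity and turn function equality into pointwise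
      have e1 : ∀ x : Fin k → ZMod (2^(t+2)),
          (((∑ i, x i ^ 2 = ((lam:ℤ) : ZMod (2^(t+2)))) ∧ ∃ i, ¬ 2 ∣ (x i).val) ∧
            (fun i => red (t+2) t h20 (x i)) = w) ↔
          ((∑ i, x i ^ 2 = ((lam:ℤ) : ZMod (2^(t+2)))) ∧ ∀ i, red (t+2) t h20 (x i) = w i) := by
        intro x
        constructor
        · rintro ⟨⟨hs, _⟩, hf⟩
          exact ⟨hs, fun i => congrFun hf i⟩
        · rintro ⟨hs, hf⟩
          refine ⟨⟨hs, ?_⟩, funext hf⟩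
          obtain ⟨i, hi⟩ := hwprim
          exact ⟨i, by rw [← hf i] at hi; exact (not_congr (red_parity _ ht1 (x i))).mp hi⟩
      rw [Nat.card_congr (Equiv.subtypeEquivRight e1)]
      -- inner grouping along red to level t+1
      have inner : Nat.card {x : Fin k → ZMod (2^(t+2)) //
          (∑ i, x i ^ 2 = ((lam:ℤ) : ZMod (2^(t+2)))) ∧ ∀ i, red (t+2) t h20 (x i) = w i}
          = 2^k * Nat.card {z : Fin k → ZMod (2^(t+1)) //
            (∀ i, red (t+1) t (Nat.le_succ t) (z i) = w i) ∧
            ∑ i, ((((z i).val : ℕ)) : ZMod (2^(t+2)))^2 = ((lam : ℤ) : ZMod (2^(t+2)))} := by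
        refine sigma_count
          (fun x : Fin k → ZMod (2^(t+2)) => fun i => red (t+2) (t+1) h21 (x i))
          (fun x => (∑ i, x i ^ 2 = ((lam:ℤ) : ZMod (2^(t+2)))) ∧
            ∀ i, red (t+2) t h20 (x i) = w i)
          (fun z => (∀ i, red (t+1) t (Nat.le_succ t) (z i) = w i) ∧
            ∑ i, ((((z i).val : ℕ)) : ZMod (2^(t+2)))^2 = ((lam : ℤ) : ZMod (2^(t+2))))
          (2^k) ?_ ?_
        · rintro x ⟨hs, hf⟩
          refine ⟨fun i => by rw [red_red h21 (Nat.le_succ t) (x i)]; exact hf i, ?_⟩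
          rw [← hs]
          refine Finset.sum_congr rfl fun i _ => ?_
          refine sq_lift h11 _ _ ?_
          rw [red_lift]
        · rintro z ⟨hzw, hzs⟩
          have e2 : ∀ x : Fin k → ZMod (2^(t+2)),
              (((∑ i, x i ^ 2 = ((lam:ℤ) : ZMod (2^(t+2)))) ∧
                ∀ i, red (t+2) t h20 (x i) = w i) ∧
                (fun i => red (t+2) (t+1) h21 (x i)) = z) ↔
              ∀ i, red (t+2) (t+1) h21 (x i) = z i := by
            intro x
            constructor
            · intro h i
              exact congrFun h.2 i
            · intro hx
              refine ⟨⟨?_, ?_⟩, funext hx⟩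
              · rw [← hzs]
                refine Finset.sum_congr rfl fun i _ => ?_
                refine sq_lift h11 _ _ ?_
                rw [red_lift, hx i]
              · intro i
                rw [← red_red h21 (Nat.le_succ t) (x i), hx i]
                exact hzw i
          rw [Nat.card_congr (Equiv.subtypeEquivRight e2)]
          exact pi_fiber_card _ z 2
            (fun i => by rw [red_fiber_card, e21, pow_one])
      rw [inner, balanced k t ht lam w hwprim hwsum, ← pow_add, ekk]
  rw [hB, hA, ← mul_assoc, ← pow_add, ekk']

lemma even_sq_zmod4 (d : ZMod (2^2)) (hd : 2 ∣ d.val) : d^2 = 0 := by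
  obtain ⟨c, hc⟩ := hd
  have : d = ((2*c : ℕ) : ZMod (2^2)) := by
    rw [← hc, ZMod.natCast_val, ZMod.cast_id]
  rw [this, show (((2*c : ℕ)) : ZMod (2^2))^2 = (((2*c)^2 : ℕ) : ZMod (2^2)) from by push_cast; ring]
  rw [ZMod.natCast_eq_zero_iff]
  exact ⟨c^2, by ring⟩

lemma allprim (k s : ℕ) (hs : 2 ≤ s) (lam : ℤ) (hl : lam % 4 = 2) :
    rho k lam (2^s) = Pc k s lam := by
  classical
  have h := card_split (α := Fin k → ZMod (2^s))
    (fun x => ∑ i, x i ^ 2 = ((lam : ℤ) : ZMod (2^s))) (fun x => ∃ i, ¬ 2 ∣ (x i).val)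
  have hz : Nat.card {x : Fin k → ZMod (2^s) //
      (∑ i, x i ^ 2 = ((lam : ℤ) : ZMod (2^s))) ∧ ¬ ∃ i, ¬ 2 ∣ (x i).val} = 0 := by
    have hno : ∀ x : Fin k → ZMod (2^s), (∑ i, x i ^ 2 = ((lam : ℤ) : ZMod (2^s))) →
        (∀ i, 2 ∣ (x i).val) → False := by
      intro x hx hall
      have h2s : 2 ≤ s := hs
      have hred : red s 2 h2s (∑ i, x i ^ 2) = ((lam : ℤ) : ZMod (2^2)) := by
        rw [hx, map_intCast]
      rw [sum_red_sq] at hred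
      have hzero : ∑ i, (red s 2 h2s (x i))^2 = (0 : ZMod (2^2)) := by
        refine Finset.sum_eq_zero fun i _ => ?_
        exact even_sq_zmod4 _ ((red_parity h2s one_le_two (x i)).mpr (hall i))
      rw [hzero] at hred
      have hdv : ((2^2 : ℕ) : ℤ) ∣ lam :=
        (ZMod.intCast_zmod_eq_zero_iff_dvd lam (2^2)).mp hred.symm
      have h4 : ((2^2 : ℕ) : ℤ) = 4 := by norm_num
      rw [h4] at hdv
      obtain ⟨c, hc⟩ := hdv
      rw [hc, Int.mul_emod_right] at hl
      exact absurd hl (by norm_num)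
    have hempty : IsEmpty {x : Fin k → ZMod (2^s) //
        (∑ i, x i ^ 2 = ((lam : ℤ) : ZMod (2^s))) ∧ ¬ ∃ i, ¬ 2 ∣ (x i).val} :=
      ⟨fun y => hno y.1 y.2.1 (not_exists_not.mp y.2.2)⟩
    exact Nat.card_of_isEmpty
  rw [hz, add_zero] at h
  exact h

lemma rho_two (k : ℕ) (hk : 0 < k) : rho k 0 2 = 2^(k-1) := by
  classical
  unfold rho
  have e : ∀ x : Fin k → ZMod 2,
      (∑ i, x i ^ 2 = ((0:ℤ) : ZMod 2)) ↔ (∑ i, (1 : ZMod 2) * x i = 0) := by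
    intro x
    rw [Int.cast_zero]
    constructor <;> intro h <;>
      simpa [zmod2_sq, one_mul] using h
  rw [Nat.card_congr (Equiv.subtypeEquivRight e)]
  exact fun_fiber (fun _ => 1) ⟨⟨0, hk⟩, rfl⟩ 0

lemma chain (k j : ℕ) (lam : ℤ) : Pc k (3+j) lam = 2^(j*(k-1)) * Pc k 3 lam := by
  induction j with
  | zero => simp
  | succ n ih =>
    have hidx : 3+(n+1) = (n+2)+2 := by omega
    have hidx2 : (n+2)+1 = 3+n := by omega
    rw [hidx, descent k (n+2) (by omega) lam, hidx2, ih, ← mul_assoc, ← pow_add]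
    congr 2
    rw [Nat.succ_mul]
    omega

lemma Pc_mod (k s : ℕ) (lam lam2 : ℤ)
    (h : ((lam : ℤ) : ZMod (2^s)) = ((lam2 : ℤ) : ZMod (2^s))) : Pc k s lam = Pc k s lam2 := by
  unfold Pc
  rw [h]

lemma int_mod_cast (s : ℕ) (a : ℤ) :
    ((a : ℤ) : ZMod (2^s)) = (((a % (2^s : ℕ) : ℤ)) : ZMod (2^s)) := by
  rw [ZMod.intCast_eq_intCast_iff]
  exact (Int.emod_emod_of_dvd a dvd_rfl).symm

lemma Pc3_zero_eq (k : ℕ) (hk : 0 < k) : rho k 0 8 = Pc k 3 0 + 2^(2*k-1) := by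
  have h := split k 1 0
  rw [mul_zero] at h
  have h8 : (2:ℕ)^(1+2) = 8 := by norm_num
  have h2 : (2:ℕ)^1 = 2 := by norm_num
  rw [h8, h2, rho_two k hk] at h
  have hpc : Pc k (1+2) 0 = Pc k 3 0 := by norm_num
  rw [hpc] at h
  rw [h, ← pow_add]
  congr 2
  omega

lemma aux_main (k : ℕ) (hk : 0 < k) : ∀ m s : ℕ, 2*m+3 ≤ s → ∀ lam' : ℤ, Odd lam' →
    rho k (2^(2*m+1) * lam') (2^s)
      = (∑ i ∈ Finset.range m, 2^(k*i + (s-2*i-3)*(k-1))) * (rho k 0 8 - 2^(2*k-1))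
        + 2^(k*m + (s-(2*m+1)-2)*(k-1)) * rho k ((2*lam') % 8) 8 := by
  intro m
  induction m with
  | zero =>
    intro s hs lam' hodd
    obtain ⟨c, hc⟩ := hodd
    have hmod4 : (2*lam') % 4 = 2 := by omega
    have hmod4' : ((2*lam') % 8) % 4 = 2 := by omega
    rw [show (2:ℤ)^(2*0+1) * lam' = 2*lam' from by ring]
    rw [allprim k s (by omega) (2*lam') hmod4]
    have hchain := chain k (s-3) (2*lam')
    rw [show 3+(s-3) = s from by omega] at hchain
    rw [hchain]
    have hcast : ((2*lam' : ℤ) : ZMod (2^3)) = (((2*lam') % 8 : ℤ) : ZMod (2^3)) := by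
      have := int_mod_cast 3 (2*lam')
      rwa [show ((2^3 : ℕ) : ℤ) = 8 from by norm_num] at this
    rw [Pc_mod k 3 (2*lam') ((2*lam') % 8) hcast,
      ← allprim k 3 (by omega) ((2*lam') % 8) hmod4',
      show (2:ℕ)^3 = 8 from by norm_num]
    simp only [Finset.range_zero, Finset.sum_empty, zero_mul, zero_add, Nat.mul_zero,
      Nat.zero_add]
    rw [show s - (2*0+1) - 2 = s-3 from by omega]
  | succ n ih =>
    intro s hs lam' hodd
    have hs2 : 2*n+3 ≤ s-2 := by omega
    have hIH := ih (s-2) hs2 lam' hodd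
    have hfac : (2:ℤ)^(2*(n+1)+1) * lam' = 4 * (2^(2*n+1) * lam') := by ring
    have hsplit := split k (s-2) (2^(2*n+1) * lam')
    rw [show (s-2)+2 = s from by omega] at hsplit
    rw [hfac, hsplit, hIH]
    -- the Pc term
    have h8dvd : ((2^3:ℕ):ℤ) ∣ 4 * ((2:ℤ)^(2*n+1) * lam') := by
      rw [show ((2^3 : ℕ) : ℤ) = 8 from by norm_num]
      exact ⟨2^(2*n) * lam', by ring⟩
    have hPc0 : Pc k 3 (4*((2:ℤ)^(2*n+1)*lam')) = Pc k 3 0 := by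
      refine Pc_mod k 3 _ _ ?_
      rw [Int.cast_zero, ZMod.intCast_zmod_eq_zero_iff_dvd]
      exact h8dvd
    have hchain := chain k (s-3) (4*((2:ℤ)^(2*n+1)*lam'))
    rw [show 3+(s-3) = s from by omega] at hchain
    have hPc3 : Pc k 3 0 = rho k 0 8 - 2^(2*k-1) := by
      rw [Pc3_zero_eq k hk]
      omega
    rw [hchain, hPc0, hPc3]
    -- algebra
    rw [Finset.sum_range_succ']
    have hsum2 : ∑ i ∈ Finset.range n, 2^(k*(i+1) + (s-2*(i+1)-3)*(k-1))
        = 2^k * ∑ i ∈ Finset.range n, 2^(k*i + (s-2-2*i-3)*(k-1)) := by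
      rw [Finset.mul_sum]
      refine Finset.sum_congr rfl fun i _ => ?_
      rw [← pow_add]
      congr 1
      rw [show s-2*(i+1)-3 = s-2-2*i-3 from by omega]
      ring
    have hD : (2:ℕ)^k * 2^(k*n + (s-2-(2*n+1)-2)*(k-1))
        = 2^(k*(n+1) + (s-(2*(n+1)+1)-2)*(k-1)) := by
      rw [← pow_add]
      congr 1
      rw [show s-2-(2*n+1)-2 = s-(2*(n+1)+1)-2 from by omega]
      ring
    rw [hsum2, show k*0 + (s-2*0-3)*(k-1) = (s-3)*(k-1) from by
      rw [Nat.mul_zero, Nat.zero_add, Nat.mul_zero, Nat.sub_zero]]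
    rw [← hD]
    ring

/-- For `λ = 2^r·λ'` with `λ'` odd, `r` odd and `s − r > 1`:
`ρ_{k,λ}(2^s) = (Σ_{i=0}^{(r−3)/2} 2^{ki+(s−2i−3)(k−1)}) · (ρ_{k,0}(8) − 2^{2k−1})
+ 2^{k(r−1)/2+(s−r−2)(k−1)} · ρ_{k,2λ' mod 8}(8)` (the sum is empty when `r = 1`). -/
theorem rho_two_pow_r_odd (k : ℕ) (hk : 0 < k) (s : ℕ) (hs : 3 ≤ s)
    (lam : ℤ) (hlam0 : 0 < lam) (hlam1 : lam < 2 ^ s)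
    (r : ℕ) (lam' : ℤ) (hr : r < s) (hfac : lam = 2 ^ r * lam') (hodd : Odd lam')
    (hrodd : Odd r) (hsr : 1 < s - r) :
    rho k lam (2 ^ s) =
      (∑ i ∈ Finset.range ((r - 1) / 2), 2 ^ (k * i + (s - 2 * i - 3) * (k - 1))) *
        (rho k 0 8 - 2 ^ (2 * k - 1))
      + 2 ^ (k * ((r - 1) / 2) + (s - r - 2) * (k - 1)) * rho k ((2 * lam') % 8) 8 := by
  obtain ⟨m, hm0⟩ := hrodd
  have hm : r = 2*m+1 := by omega
  have hs' : 2*m+3 ≤ s := by omega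
  have h := aux_main k hk m s hs' lam' hodd
  rw [hfac, hm, show (2*m+1-1)/2 = m from by omega]
  exact h
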